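/- With L(k) = ∑_{j=1}^{k-1} (-1)^{j-1} a_j for the partial quotients of x(b), for n = 2^j with n ≥ 8 and 2 ≤ k ≤ n/2 - 1, one has L(n+k) = L(k) - 4. -/

import Mathlib

/-- Partial quotients of x(b) via the folding recursion (fuel-based; fuel `k` suffices
since every recursive call has a strictly smaller index). -/
def cfAAux (b : ℤ) : ℕ → ℕ → ℤ
  | 0, _ => 0
  | fuel + 1, k =>
    if k = 0 then 0
    else if k = 1 then b - 1
    else if k = 2 then b + 2
    else
      let n := 2 ^ Nat.log2 (k - 1)
      if k = n + 1 then cfAAux b fuel n - 2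
      else if k = 2 * n then cfAAux b fuel 1 + 1
      else cfAAux b fuel (2 * n + 1 - k)

/-- `cfA b k` = the k-th partial quotient `a_k` of x(b). -/
def cfA (b : ℤ) (k : ℕ) : ℤ := cfAAux b k k

/-- `L(k) = ∑_{j=1}^{k-1} (-1)^{j-1} a_j`. -/
def Lfun (b : ℤ) (k : ℕ) : ℤ := ∑ j ∈ Finset.Ioo 0 k, (-1) ^ (j - 1) * cfA b j

lemma cfAAux_fuel (b : ℤ) : ∀ k f₁ f₂, k ≤ f₁ → k ≤ f₂ → cfAAux b f₁ k = cfAAux b f₂ k := by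
  intro k
  induction k using Nat.strong_induction_on with
  | _ k ih =>
    intro f₁ f₂ h₁ h₂
    rcases Nat.eq_zero_or_pos k with rfl | hk
    · cases f₁ <;> cases f₂ <;> simp [cfAAux]
    obtain ⟨g₁, rfl⟩ : ∃ g, f₁ = g + 1 := ⟨f₁ - 1, by omega⟩
    obtain ⟨g₂, rfl⟩ : ∃ g, f₂ = g + 1 := ⟨f₂ - 1, by omega⟩
    simp only [cfAAux]
    by_cases hk0 : k = 0
    · simp [hk0]
    by_cases hk1 : k = 1
    · simp [hk1]
    by_cases hk2 : k = 2
    · simp [hk2]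
    rw [if_neg hk0, if_neg hk1, if_neg hk2, if_neg hk0, if_neg hk1, if_neg hk2]
    have hk3 : 3 ≤ k := by omega
    have hN1 : 1 ≤ 2 ^ Nat.log2 (k - 1) := Nat.one_le_two_pow
    have hNle : 2 ^ Nat.log2 (k - 1) ≤ k - 1 := Nat.log2_self_le (by omega)
    by_cases e1 : k = 2 ^ Nat.log2 (k - 1) + 1
    · rw [if_pos e1, if_pos e1,
        ih (2 ^ Nat.log2 (k - 1)) (by omega) g₁ g₂ (by omega) (by omega)]
    rw [if_neg e1, if_neg e1]
    by_cases e2 : k = 2 * 2 ^ Nat.log2 (k - 1)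
    · rw [if_pos e2, if_pos e2, ih 1 (by omega) g₁ g₂ (by omega) (by omega)]
    · rw [if_neg e2, if_neg e2,
        ih (2 * 2 ^ Nat.log2 (k - 1) + 1 - k) (by omega) g₁ g₂ (by omega) (by omega)]

lemma cfAAux_eq_cfA (b : ℤ) (f k : ℕ) (h : k ≤ f) : cfAAux b f k = cfA b k :=
  cfAAux_fuel b k f k h le_rfl

lemma log2_eq (i x : ℕ) (h1 : 2 ^ i ≤ x) (h2 : x < 2 ^ (i + 1)) : Nat.log2 x = i := by
  have hx : x ≠ 0 := by have : 1 ≤ 2 ^ i := Nat.one_le_two_pow; omega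
  have ha := Nat.log2_self_le hx
  have hb := Nat.lt_log2_self (n := x)
  rcases lt_trichotomy (Nat.log2 x) i with h | h | h
  · exfalso
    have : 2 ^ (Nat.log2 x + 1) ≤ 2 ^ i := Nat.pow_le_pow_right (by norm_num) (by omega)
    omega
  · exact h
  · exfalso
    have : 2 ^ (i + 1) ≤ 2 ^ Nat.log2 x := Nat.pow_le_pow_right (by norm_num) (by omega)
    omega

lemma cfA_unfold (b : ℤ) (i m : ℕ) (hi : 1 ≤ i) (h1 : 2 ^ i + 1 ≤ m) (h2 : m ≤ 2 * 2 ^ i) :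
    cfA b m = if m = 2 ^ i + 1 then cfA b (2 ^ i) - 2
      else if m = 2 * 2 ^ i then b
      else cfA b (2 * 2 ^ i + 1 - m) := by
  have hN2 : (2 : ℕ) ≤ 2 ^ i := by
    calc (2 : ℕ) = 2 ^ 1 := rfl
    _ ≤ 2 ^ i := Nat.pow_le_pow_right (by norm_num) hi
  obtain ⟨f, rfl⟩ : ∃ f, m = f + 1 := ⟨m - 1, by omega⟩
  rw [cfA]
  simp only [cfAAux]
  rw [if_neg (by omega : ¬ f + 1 = 0), if_neg (by omega : ¬ f + 1 = 1),
    if_neg (by omega : ¬ f + 1 = 2)]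
  have hlog : Nat.log2 (f + 1 - 1) = i := by
    have hff : f + 1 - 1 = f := rfl
    rw [hff]
    refine log2_eq i f (by omega) ?_
    have : 2 ^ (i + 1) = 2 * 2 ^ i := by ring
    omega
  rw [hlog]
  by_cases e1 : f + 1 = 2 ^ i + 1
  · rw [if_pos e1, if_pos e1, cfAAux_eq_cfA b f (2 ^ i) (by omega)]
  rw [if_neg e1, if_neg e1]
  by_cases e2 : f + 1 = 2 * 2 ^ i
  · rw [if_pos e2, if_pos e2, cfAAux_eq_cfA b f 1 (by omega)]
    have h1' : cfA b 1 = b - 1 := rfl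
    rw [h1']; ring
  · rw [if_neg e2, if_neg e2, cfAAux_eq_cfA b f (2 * 2 ^ i + 1 - (f + 1)) (by omega)]

lemma cfA_succ_pow (b : ℤ) (i : ℕ) (hi : 1 ≤ i) : cfA b (2 ^ i + 1) = cfA b (2 ^ i) - 2 := by
  have hN2 : (2 : ℕ) ≤ 2 ^ i := by
    calc (2 : ℕ) = 2 ^ 1 := rfl
    _ ≤ 2 ^ i := Nat.pow_le_pow_right (by norm_num) hi
  rw [cfA_unfold b i (2 ^ i + 1) hi le_rfl (by omega), if_pos rfl]

lemma cfA_reflect (b : ℤ) (i m : ℕ) (hi : 1 ≤ i) (h1 : 2 ^ i + 2 ≤ m) (h2 : m ≤ 2 * 2 ^ i - 1) :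
    cfA b m = cfA b (2 * 2 ^ i + 1 - m) := by
  have hN2 : (2 : ℕ) ≤ 2 ^ i := by
    calc (2 : ℕ) = 2 ^ 1 := rfl
    _ ≤ 2 ^ i := Nat.pow_le_pow_right (by norm_num) hi
  rw [cfA_unfold b i m hi (by omega) (by omega), if_neg (by omega), if_neg (by omega)]

lemma sign_flip (N m : ℕ) (h1 : 1 ≤ m) (h2 : m ≤ 2 * N) :
    ((-1 : ℤ)) ^ (m - 1) = -(-1 : ℤ) ^ (2 * N - m) := by
  have hodd : Odd ((m - 1) + (2 * N - m)) := ⟨N - 1, by omega⟩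
  have h : ((-1 : ℤ)) ^ ((m - 1) + (2 * N - m)) = -1 := hodd.neg_one_pow
  rw [pow_add] at h
  rcases Nat.even_or_odd (2 * N - m) with h' | h'
  · have he : ((-1 : ℤ)) ^ (2 * N - m) = 1 := h'.neg_one_pow
    rw [he] at h ⊢; linarith
  · have he : ((-1 : ℤ)) ^ (2 * N - m) = -1 := h'.neg_one_pow
    rw [he] at h ⊢; linarith

lemma reflect_sum (b : ℤ) (i A B : ℕ) (hi : 1 ≤ i) (hA : 2 ^ i + 2 ≤ A) (hB : B ≤ 2 * 2 ^ i) :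
    ∑ m ∈ Finset.Ico A B, ((-1 : ℤ) ^ (m - 1) * cfA b m)
      = - ∑ m ∈ Finset.Ico (2 * 2 ^ i + 2 - B) (2 * 2 ^ i + 2 - A),
          ((-1 : ℤ) ^ (m - 1) * cfA b m) := by
  have key := Finset.sum_Ico_reflect (f := fun m => (-1 : ℤ) ^ (m - 1) * cfA b m)
    (k := A) (m := B) (n := 2 * 2 ^ i + 1) (by omega)
  rw [show 2 * 2 ^ i + 1 + 1 - B = 2 * 2 ^ i + 2 - B from by omega,
    show 2 * 2 ^ i + 1 + 1 - A = 2 * 2 ^ i + 2 - A from by omega] at key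
  rw [← key, ← Finset.sum_neg_distrib]
  apply Finset.sum_congr rfl
  intro m hm
  rw [Finset.mem_Ico] at hm
  have hm1 : 2 ^ i + 2 ≤ m := by omega
  have hm2 : m ≤ 2 * 2 ^ i - 1 := by omega
  have e1 : 2 * 2 ^ i + 1 - m - 1 = 2 * 2 ^ i - m := by omega
  show (-1 : ℤ) ^ (m - 1) * cfA b m
    = -((-1 : ℤ) ^ (2 * 2 ^ i + 1 - m - 1) * cfA b (2 * 2 ^ i + 1 - m))
  rw [e1, ← cfA_reflect b i m hi hm1 hm2, sign_flip (2 ^ i) m (by omega) (by omega)]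
  ring

theorem L_shift (b : ℤ) (hb : 3 ≤ b) (j n : ℕ) (hn : n = 2 ^ j) (h8 : 8 ≤ n)
    (k : ℕ) (hk : 2 ≤ k) (hk' : k ≤ n / 2 - 1) :
    Lfun b (n + k) = Lfun b k - 4 := by
  have hj : 3 ≤ j := by
    by_contra h
    interval_cases j <;> omega
  set M : ℕ := 2 ^ (j - 1) with hM
  have hnM : n = 2 * M := by
    rw [hn, hM, ← pow_succ']
    congr 1
    omega
  have hMeven : M = 2 * 2 ^ (j - 2) := by
    rw [hM, ← pow_succ']
    congr 1
    omega
  have hM4 : 4 ≤ M := by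
    calc (4 : ℕ) = 2 ^ 2 := rfl
    _ ≤ 2 ^ (j - 1) := Nat.pow_le_pow_right (by norm_num) (by omega)
  have hkM : k ≤ M - 1 := by omega
  set g : ℕ → ℤ := fun m => (-1 : ℤ) ^ (m - 1) * cfA b m with hg
  have hL : ∀ m, Lfun b m = ∑ i ∈ Finset.Ico 1 m, g i := by
    intro m
    rw [Lfun, ← Finset.Ico_add_one_left_eq_Ioo]; rfl
  rw [hL, hL]
  have key := Finset.sum_Ico_consecutive g (show 1 ≤ k by omega) (show k ≤ n + k by omega)
  have hgoal : ∑ m ∈ Finset.Ico k (n + k), g m = -4 := by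
    rw [← Finset.sum_Ico_consecutive g (show k ≤ M by omega) (show M ≤ n + k by omega),
      ← Finset.sum_Ico_consecutive g (show M ≤ M + 2 by omega) (show M + 2 ≤ n + k by omega),
      ← Finset.sum_Ico_consecutive g (show M + 2 ≤ n + 2 - k by omega)
        (show n + 2 - k ≤ n + k by omega),
      ← Finset.sum_Ico_consecutive g (show n + 2 - k ≤ n by omega) (show n ≤ n + k by omega),
      ← Finset.sum_Ico_consecutive g (show n ≤ n + 2 by omega) (show n + 2 ≤ n + k by omega)]
    have hS2 : ∑ m ∈ Finset.Ico M (M + 2), g m = -2 := by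
      rw [show M + 2 = (M + 1) + 1 from rfl, Finset.sum_Ico_succ_top (by omega),
        Finset.sum_Ico_succ_top (by omega), Finset.Ico_self, Finset.sum_empty]
      have hsucc : cfA b (M + 1) = cfA b M - 2 := cfA_succ_pow b (j - 1) (by omega)
      have hpar1 : ((-1 : ℤ)) ^ (M - 1) = -1 := Odd.neg_one_pow ⟨2 ^ (j - 2) - 1, by omega⟩
      have hpar2 : ((-1 : ℤ)) ^ (M + 1 - 1) = 1 := Even.neg_one_pow ⟨2 ^ (j - 2), by omega⟩
      simp only [hg, hsucc, hpar1, hpar2]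
      ring
    have hS5 : ∑ m ∈ Finset.Ico n (n + 2), g m = -2 := by
      rw [show n + 2 = (n + 1) + 1 from rfl, Finset.sum_Ico_succ_top (by omega),
        Finset.sum_Ico_succ_top (by omega), Finset.Ico_self, Finset.sum_empty]
      have hsucc : cfA b (n + 1) = cfA b n - 2 := by
        rw [hn]; exact cfA_succ_pow b j (by omega)
      have hpar1 : ((-1 : ℤ)) ^ (n - 1) = -1 := Odd.neg_one_pow ⟨M - 1, by omega⟩
      have hpar2 : ((-1 : ℤ)) ^ (n + 1 - 1) = 1 := Even.neg_one_pow ⟨M, by omega⟩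
      simp only [hg, hsucc, hpar1, hpar2]
      ring
    have hS3 : ∑ m ∈ Finset.Ico (M + 2) (n + 2 - k), g m
        = - ∑ m ∈ Finset.Ico k M, g m := by
      have hr := reflect_sum b (j - 1) (M + 2) (n + 2 - k) (by omega) (by omega) (by omega)
      rw [show 2 * 2 ^ (j - 1) + 2 - (n + 2 - k) = k from by omega,
        show 2 * 2 ^ (j - 1) + 2 - (M + 2) = M from by omega] at hr
      exact hr
    have hS6 : ∑ m ∈ Finset.Ico (n + 2) (n + k), g m
        = - ∑ m ∈ Finset.Ico (n + 2 - k) n, g m := by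
      have hr := reflect_sum b j (n + 2) (n + k) (by omega) (by omega) (by omega)
      rw [show 2 * 2 ^ j + 2 - (n + k) = n + 2 - k from by omega,
        show 2 * 2 ^ j + 2 - (n + 2) = n from by omega] at hr
      exact hr
    rw [hS2, hS3, hS5, hS6]
    ring
  rw [← key, hgoal]
  ring
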